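/- arXiv:1403.8089 — 3 statements merged into one kernel-verified Lean document; each statement's English description precedes it below -/
import Mathlib

section
/- For any map f : Y → X, one has secat(f) ≤ relcat(f) ≤ secat(f) + 1. -/
open ContinuousMap unitInterval

noncomputable section

universe u

/-! ## Double mapping cylinder (homotopy pushout) -/

inductive CylRel {A B P : Type u} (fa : P → A) (fb : P → B) :
    (A ⊕ (P × I) ⊕ B) → (A ⊕ (P × I) ⊕ B) → Prop
  | zero (p : P) : CylRel fa fb (.inr (.inl (p, 0))) (.inl (fa p))
  | one (p : P) : CylRel fa fb (.inr (.inl (p, 1))) (.inr (.inr (fb p)))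

/-- The double mapping cylinder, i.e. the homotopy pushout, of `A ←fa- P -fb→ B`. -/
def Cyl {A B P : Type u} [TopologicalSpace A] [TopologicalSpace B] [TopologicalSpace P]
    (fa : P → A) (fb : P → B) : Type u := Quot (CylRel fa fb)

instance {A B P : Type u} [TopologicalSpace A] [TopologicalSpace B] [TopologicalSpace P]
    (fa : P → A) (fb : P → B) : TopologicalSpace (Cyl fa fb) :=
  inferInstanceAs (TopologicalSpace (Quot _))

/-! ## Homotopy pullback and the fibrewise join of two maps -/

/-- The homotopy pullback of `α : A → C` and `β : B → C`. -/
def HPullback {A B C : Type u} [TopologicalSpace A] [TopologicalSpace B] [TopologicalSpace C]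
    (α : C(A, C)) (β : C(B, C)) : Type u :=
  {x : A × C(I, C) × B // x.2.1 0 = α x.1 ∧ x.2.1 1 = β x.2.2}

instance {A B C : Type u} [TopologicalSpace A] [TopologicalSpace B] [TopologicalSpace C]
    (α : C(A, C)) (β : C(B, C)) : TopologicalSpace (HPullback α β) :=
  inferInstanceAs (TopologicalSpace {x : A × C(I, C) × B // _})

/-- The join `A *_C B` of two maps `α : A → C`, `β : B → C`: the homotopy pushout of the
homotopy pullback of `α` and `β`. -/
def JoinSpace {A B C : Type u} [TopologicalSpace A] [TopologicalSpace B] [TopologicalSpace C]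
    (α : C(A, C)) (β : C(B, C)) : Type u :=
  Cyl (fun p : HPullback α β => p.1.1) (fun p : HPullback α β => p.1.2.2)

instance {A B C : Type u} [TopologicalSpace A] [TopologicalSpace B] [TopologicalSpace C]
    (α : C(A, C)) (β : C(B, C)) : TopologicalSpace (JoinSpace α β) :=
  inferInstanceAs (TopologicalSpace (Cyl _ _))

/-- The canonical map `A *_C B → C` induced by `α` and `β`. -/
def joinMap {A B C : Type u} [TopologicalSpace A] [TopologicalSpace B] [TopologicalSpace C]
    (α : C(A, C)) (β : C(B, C)) : C(JoinSpace α β, C) where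
  toFun := Quot.lift
    (Sum.elim α (Sum.elim (fun q : HPullback α β × I => q.1.1.2.1 q.2) β))
    (by rintro x y (⟨p⟩ | ⟨p⟩) <;> simp [p.2.1, p.2.2])
  continuous_toFun := by
    apply continuous_quot_lift
    apply Continuous.sumElim α.continuous
    apply Continuous.sumElim _ β.continuous
    exact (continuous_eval.comp
      ((continuous_subtype_val.comp continuous_fst).snd.fst.prodMk continuous_snd))

/-- Inclusion of the second factor `B → A *_C B`. -/
def joinInr {A B C : Type u} [TopologicalSpace A] [TopologicalSpace B] [TopologicalSpace C]
    (α : C(A, C)) (β : C(B, C)) : C(B, JoinSpace α β) where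
  toFun b := Quot.mk _ (.inr (.inr b))
  continuous_toFun := continuous_quot_mk.comp (continuous_inr.comp continuous_inr)

/-! ## Iterated joins, sectional category and relative category -/

/-- A space over `X`. -/
structure Fibw (X : Type u) [TopologicalSpace X] : Type (u + 1) where
  E : Type u
  [tE : TopologicalSpace E]
  p : @ContinuousMap E X tE _

attribute [instance] Fibw.tE

variable {X Y : Type u} [TopologicalSpace X] [TopologicalSpace Y]

/-- The `n`-th iterated join `j^n_f : *^n_X Y → X` of a map `f : Y → X`. -/
def iJoin (f : C(Y, X)) : ℕ → Fibw X
  | 0 => ⟨Y, f⟩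
  | n + 1 => ⟨JoinSpace (iJoin f n).p f, joinMap (iJoin f n).p f⟩

/-- The canonical map `ι_n : Y → *^n_X Y` (with `ι_0 = id`), satisfying `j^n_f ∘ ι_n = f`. -/
def iotaJoin (f : C(Y, X)) : (n : ℕ) → C(Y, (iJoin f n).E)
  | 0 => ContinuousMap.id Y
  | n + 1 => joinInr (iJoin f n).p f

/-- A map admits a homotopy section. -/
def HasHomotopySection {E B : Type u} [TopologicalSpace E] [TopologicalSpace B]
    (p : C(E, B)) : Prop :=
  ∃ s : C(B, E), (p.comp s).Homotopic (ContinuousMap.id B)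

/-- The sectional category of `f : Y → X`: the least `n` such that the `n`-th iterated join
`j^n_f : *^n_X Y → X` admits a homotopy section. -/
def secat (f : C(Y, X)) : ℕ∞ :=
  sInf {n : ℕ∞ | ∃ m : ℕ, n = m ∧ HasHomotopySection (iJoin f m).p}

/-- The relative category of `f : Y → X` (Doeraene–El Haouari): the least `n` such that
`j^n_f` admits a homotopy section `σ` with `σ ∘ f ≃ ι_n`. -/
def relcat (f : C(Y, X)) : ℕ∞ :=
  sInf {n : ℕ∞ | ∃ m : ℕ, n = m ∧ ∃ s : C(X, (iJoin f m).E),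
    ((iJoin f m).p.comp s).Homotopic (ContinuousMap.id X) ∧
    (s.comp f).Homotopic (iotaJoin f m)}

end
noncomputable section AuxProof

universe v

/-- Inclusion of the first factor `A → A *_C B`. -/
def joinInl' {A B C : Type v} [TopologicalSpace A] [TopologicalSpace B] [TopologicalSpace C]
    (α : C(A, C)) (β : C(B, C)) : C(A, JoinSpace α β) where
  toFun a := Quot.mk _ (.inl a)
  continuous_toFun := continuous_quot_mk.comp continuous_inl

variable {X Y : Type v} [TopologicalSpace X] [TopologicalSpace Y]

lemma key_step (f : C(Y, X)) (n : ℕ) (h : HasHomotopySection (iJoin f n).p) :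
    ∃ s : C(X, (iJoin f (n + 1)).E),
      ((iJoin f (n + 1)).p.comp s).Homotopic (ContinuousMap.id X) ∧
      (s.comp f).Homotopic (iotaJoin f (n + 1)) := by
  obtain ⟨s, ⟨H⟩⟩ := h
  set E := (iJoin f n).E
  set p := (iJoin f n).p
  -- the path x ↦ (t ↦ H (t, x))
  let G : C(X, C(I, X)) :=
    ContinuousMap.curry ⟨fun q : X × I => H (q.2, q.1), by
      exact H.continuous.comp (continuous_snd.prodMk continuous_fst)⟩
  have hG0 : ∀ x, G x 0 = p (s x) := fun x => H.apply_zero x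
  have hG1 : ∀ x, G x 1 = x := fun x => H.apply_one x
  -- a family of points of the homotopy pullback
  let Q : C(Y, HPullback p f) :=
    ⟨fun y => ⟨(s (f y), G (f y), y), hG0 (f y), hG1 (f y)⟩, by
      apply Continuous.subtype_mk
      exact (s.continuous.comp f.continuous).prodMk
        ((G.continuous.comp f.continuous).prodMk continuous_id)⟩
  refine ⟨(joinInl' p f).comp s, ⟨?_⟩, ⟨?_⟩⟩
  · -- p_{n+1} ∘ (inl ∘ s) = p ∘ s ≃ id
    exact { toFun := fun q => H q
            continuous_toFun := H.continuous
            map_zero_left := fun x => H.apply_zero x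
            map_one_left := fun x => H.apply_one x }
  · -- homotopy through the cylinder from inl ∘ s ∘ f to inr = ι_{n+1}
    refine
      { toFun := fun q : I × Y =>
          (Quot.mk _ (.inr (.inl (Q q.2, q.1))) : JoinSpace p f)
        continuous_toFun := continuous_quot_mk.comp <| continuous_inr.comp <|
          continuous_inl.comp <| (Q.continuous.comp continuous_snd).prodMk continuous_fst
        map_zero_left := fun y => ?_
        map_one_left := fun y => ?_ }
    · exact Quot.sound (CylRel.zero (Q y))
    · exact Quot.sound (CylRel.one (Q y))

end AuxProof

/-- For any map `f : Y → X`, `secat(f) ≤ relcat(f) ≤ secat(f) + 1`. -/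
theorem secat_le_relcat_le_secat_add_one {X Y : Type u} [TopologicalSpace X]
    [TopologicalSpace Y] (f : C(Y, X)) :
    secat f ≤ relcat f ∧ relcat f ≤ secat f + 1 := by
  constructor
  · apply sInf_le_sInf
    rintro n ⟨m, hn, s, hs, -⟩
    exact ⟨m, hn, s, hs⟩
  · by_cases hT : {m : ℕ | HasHomotopySection (iJoin f m).p}.Nonempty
    · set T := {m : ℕ | HasHomotopySection (iJoin f m).p}
      have hm : sInf T ∈ T := Nat.sInf_mem hT
      obtain ⟨s, hs1, hs2⟩ := key_step f (sInf T) hm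
      have h1 : relcat f ≤ ((sInf T + 1 : ℕ) : ℕ∞) :=
        sInf_le ⟨sInf T + 1, rfl, s, hs1, hs2⟩
      have h2 : ((sInf T : ℕ) : ℕ∞) ≤ secat f := by
        apply le_sInf
        rintro n ⟨m', hn, hm'⟩
        subst hn
        exact_mod_cast Nat.sInf_le hm'
      calc relcat f ≤ ((sInf T + 1 : ℕ) : ℕ∞) := h1
        _ = ((sInf T : ℕ) : ℕ∞) + 1 := by push_cast; ring
        _ ≤ secat f + 1 := add_le_add_left h2 1
    · have : secat f = ⊤ := by
        rw [secat, sInf_eq_top]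
        rintro n ⟨m, hn, hm⟩
        exact absurd ⟨m, hm⟩ hT
      simp [this]
end

section
/- For the inclusion f : S¹ ↪ D², secat(f) = 0 and relcat(f) = 1. -/
open ContinuousMap unitInterval

noncomputable section
open Metric

/-- The inclusion of the circle `S¹` into the disc `D²`. -/
def circleInclusion : C(sphere (0 : EuclideanSpace ℝ (Fin 2)) 1,
    closedBall (0 : EuclideanSpace ℝ (Fin 2)) 1) where
  toFun x := ⟨x.1, sphere_subset_closedBall x.2⟩
  continuous_toFun := continuous_subtype_val.subtype_mk _


section Aux
open Complex Set


lemma exp_arg_unit {z : ℂ} (hz : ‖z‖ = 1) : Complex.exp (z.arg * Complex.I) = z := by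
  have := Complex.norm_mul_exp_arg_mul_I z
  rwa [hz, ofReal_one, one_mul] at this

lemma unit_mem_slitPlane {z : ℂ} (h1 : ‖z‖ = 1) (h2 : z ≠ -1) :
    z ∈ Complex.slitPlane := by
  rw [Complex.mem_slitPlane_iff]
  by_contra h
  push_neg at h
  obtain ⟨hre, him⟩ := h
  apply h2
  have hz : z = (z.re : ℂ) := by
    apply Complex.ext <;> simp [him]
  rw [hz] at h1 ⊢
  rw [Complex.norm_real, Real.norm_eq_abs, abs_of_nonpos hre] at h1
  have : z.re = -1 := by linarith
  rw [this]; norm_num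

/-- strip lemma -/
lemma lift_step {Z : Type*} [TopologicalSpace Z] {g g' : Z → ℂ}
    (hg : Continuous g) (hg' : Continuous g')
    (hug : ∀ z, ‖g z‖ = 1) (hug' : ∀ z, ‖g' z‖ = 1)
    (hclose : ∀ z, dist (g z) (g' z) < 2)
    {L : Z → ℝ} (hL : Continuous L) (hLg : ∀ z, g z = Complex.exp (L z * Complex.I)) :
    ∃ L' : Z → ℝ, Continuous L' ∧ ∀ z, g' z = Complex.exp (L' z * Complex.I) := by
  have hg0 : ∀ z, g z ≠ 0 := fun z => by
    intro h; have := hug z; rw [h] at this; simp at this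
  have habsq : ∀ z, ‖g' z / g z‖ = 1 := fun z => by
    rw [norm_div, hug, hug']; norm_num
  have hmem : ∀ z, g' z / g z ∈ Complex.slitPlane := by
    intro z
    apply unit_mem_slitPlane (habsq z)
    intro h
    have hval : g' z = -g z := by
      rw [div_eq_iff (hg0 z)] at h
      rw [h]; ring
    have h2 := hclose z
    rw [Complex.dist_eq, hval] at h2
    have h3 : ‖g z - -g z‖ = 2 := by
      have he : g z - -g z = 2 * g z := by ring
      rw [he, norm_mul, hug]
      simp
    linarith
  refine ⟨fun z => L z + (g' z / g z).arg, ?_, ?_⟩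
  · apply hL.add
    rw [continuous_iff_continuousAt]
    intro z
    show ContinuousAt (Complex.arg ∘ fun z => g' z / g z) z
    exact ContinuousAt.comp (x := z) (Complex.continuousAt_arg (hmem z)) ((hg'.continuousAt).div (hg.continuousAt) (hg0 z))
  · intro z
    push_cast
    rw [add_mul, Complex.exp_add, ← hLg z, exp_arg_unit (habsq z)]
    rw [mul_comm, div_mul_eq_mul_div, mul_div_assoc, div_self (hg0 z), mul_one]

lemma lift_chain {Z : Type*} [TopologicalSpace Z] (M : ℕ → Z → ℂ)
    (hc : ∀ k, Continuous (M k)) (hu : ∀ k z, ‖M k z‖ = 1)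
    (hstep : ∀ k z, dist (M k z) (M (k+1) z) < 2)
    {L0 : Z → ℝ} (h0 : Continuous L0) (hL0 : ∀ z, M 0 z = Complex.exp (L0 z * Complex.I)) :
    ∀ n, ∃ L : Z → ℝ, Continuous L ∧ ∀ z, M n z = Complex.exp (L z * Complex.I) := by
  intro n
  induction n with
  | zero => exact ⟨L0, h0, hL0⟩
  | succ k ih =>
    obtain ⟨L, hLc, hLe⟩ := ih
    exact lift_step (hc k) (hc (k+1)) (hu k) (hu (k+1)) (hstep k) hLc hLe

lemma min_le_min_add (s b c : ℝ) : min s c ≤ min s b + |b - c| := by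
  have h1 : c ≤ b + |b - c| := by cases abs_cases (b-c) <;> linarith
  have h2 : s ≤ s + |b - c| := by linarith [abs_nonneg (b-c)]
  calc min s c ≤ min (s + |b-c|) (b + |b-c|) := min_le_min h2 h1
  _ = min s b + |b-c| := by rw [← min_add_add_right]

lemma min_lip (s b c : ℝ) : |min s b - min s c| ≤ |b - c| := by
  rw [abs_le]
  constructor
  · linarith [min_le_min_add s b c]
  · have := min_le_min_add s c b
    rw [abs_sub_comm c b] at this
    linarith

open Set in
lemma square_lift (K : C(unitInterval × unitInterval, ℂ))
    (hu : ∀ p, ‖K p‖ = 1) :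
    ∃ L : C(unitInterval × unitInterval, ℝ),
      ∀ p, K p = Complex.exp (L p * Complex.I) := by
  set P : ℝ → unitInterval := projIcc 0 1 zero_le_one with hP
  have hPc : Continuous P := continuous_projIcc
  set F : ℝ × ℝ → ℂ := fun q => K (P q.1, P q.2) with hF
  have hFc : Continuous F := K.continuous.comp ((hPc.comp continuous_fst).prodMk (hPc.comp continuous_snd))
  have hFu : ∀ q, ‖F q‖ = 1 := fun q => hu _
  have hFuc : UniformContinuous F := by
    have h1 : UniformContinuous K :=
      CompactSpace.uniformContinuous_of_continuous K.continuous
    have h2 : UniformContinuous (fun q : ℝ × ℝ => (P q.1, P q.2)) :=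
      ((LipschitzWith.projIcc zero_le_one).uniformContinuous.comp uniformContinuous_fst).prodMk
        ((LipschitzWith.projIcc zero_le_one).uniformContinuous.comp uniformContinuous_snd)
    exact h1.comp h2
  obtain ⟨δ, hδ, hδ2⟩ := Metric.uniformContinuous_iff.mp hFuc 2 (by norm_num)
  set d : ℝ := δ/2 with hd
  have hd0 : 0 < d := by positivity
  obtain ⟨n, hn⟩ : ∃ n : ℕ, 1 ≤ n * d := by
    refine ⟨⌈1/d⌉₊, ?_⟩
    have := Nat.le_ceil (1/d)
    calc (1:ℝ) = (1/d)*d := by field_simp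
    _ ≤ ⌈1/d⌉₊ * d := by apply mul_le_mul_of_nonneg_right this hd0.le
  -- clamp helpers
  have hPmin0 : ∀ x : ℝ, P (min x 0) = 0 := fun x => projIcc_of_le_left _ (min_le_right x 0)
  have hPminn : ∀ x : ℝ, P (min x (n*d)) = P x := by
    intro x
    rcases le_total x (n*d) with h | h
    · rw [min_eq_left h]
    · rw [min_eq_right h, hP, projIcc_of_right_le _ (le_trans hn h), projIcc_of_right_le _ hn]
  have keydist : ∀ (a b b' : ℝ), |b - b'| ≤ d → dist (F (a, b)) (F (a, b')) < 2 := by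
    intro a b b' hb
    apply hδ2
    rw [Prod.dist_eq]
    simp only [dist_self, Real.dist_eq]
    have : |b - b'| < δ := by rw [hd] at hb; linarith
    exact max_lt (by positivity) this
  have keydist' : ∀ (a a' b : ℝ), |a - a'| ≤ d → dist (F (a, b)) (F (a', b)) < 2 := by
    intro a a' b ha
    apply hδ2
    rw [Prod.dist_eq]
    simp only [dist_self, Real.dist_eq]
    have : |a - a'| < δ := by rw [hd] at ha; linarith
    exact max_lt this (by positivity)
  -- chain B along second coordinate at clamped-to-0 first coordinate
  set B : ℕ → ℝ × ℝ → ℂ := fun k q => F (min q.1 0, min q.2 (k*d)) with hB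
  have hBc : ∀ k, Continuous (B k) :=
    fun k => hFc.comp (((continuous_fst.min continuous_const)).prodMk
      ((continuous_snd.min continuous_const)))
  have hBstep : ∀ k q, dist (B k q) (B (k+1) q) < 2 := by
    intro k q
    apply keydist
    push_cast
    calc |min q.2 ((k:ℝ)*d) - min q.2 (((k:ℝ)+1)*d)| ≤ |(k:ℝ)*d - ((k:ℝ)+1)*d| := min_lip _ _ _
    _ = d := by rw [show (k:ℝ)*d - ((k:ℝ)+1)*d = -d by ring, abs_neg, abs_of_pos hd0]
  have hB0 : ∀ q, B 0 q = Complex.exp (((K ((0:unitInterval),(0:unitInterval))).arg : ℝ) * Complex.I) := by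
    intro q
    rw [exp_arg_unit (hu _)]
    show K (P (min q.1 0), P (min q.2 ((0:ℕ)*d))) = _
    rw [Nat.cast_zero, zero_mul, hPmin0, hPmin0]
  obtain ⟨L1, hL1c, hL1⟩ := lift_chain B hBc (fun k z => hFu _) hBstep
    (continuous_const : Continuous (fun _ : ℝ × ℝ => (K ((0:unitInterval),(0:unitInterval))).arg)) hB0 n
  -- chain M along first coordinate
  set M : ℕ → ℝ × ℝ → ℂ := fun k q => F (min q.1 (k*d), q.2) with hM
  have hMc : ∀ k, Continuous (M k) :=
    fun k => hFc.comp (((continuous_fst.min continuous_const)).prodMk continuous_snd)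
  have hMstep : ∀ k q, dist (M k q) (M (k+1) q) < 2 := by
    intro k q
    apply keydist'
    push_cast
    calc |min q.1 ((k:ℝ)*d) - min q.1 (((k:ℝ)+1)*d)| ≤ |(k:ℝ)*d - ((k:ℝ)+1)*d| := min_lip _ _ _
    _ = d := by rw [show (k:ℝ)*d - ((k:ℝ)+1)*d = -d by ring, abs_neg, abs_of_pos hd0]
  have hM0 : ∀ q, M 0 q = Complex.exp (L1 q * Complex.I) := by
    intro q
    rw [← hL1 q]
    show K (P (min q.1 ((0:ℕ)*d)), P q.2) = K (P (min q.1 0), P (min q.2 (n*d)))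
    rw [Nat.cast_zero, zero_mul, hPminn]
  obtain ⟨L2, hL2c, hL2⟩ := lift_chain M hMc (fun k z => hFu _) hMstep hL1c hM0 n
  refine ⟨⟨fun p => L2 (p.1.1, p.2.1), hL2c.comp ((continuous_subtype_val.comp continuous_fst).prodMk (continuous_subtype_val.comp continuous_snd))⟩, ?_⟩
  intro p
  have key : K p = M n (p.1.1, p.2.1) := by
    have h1 : min (p.1.1 : ℝ) (n*d) = p.1.1 := min_eq_left (le_trans p.1.2.2 hn)
    show K p = K (P (min (p.1.1:ℝ) (n*d)), P (p.2.1:ℝ))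
    rw [h1, hP, projIcc_of_mem _ p.1.2, projIcc_of_mem _ p.2.2]
  rw [key, hL2]
  rfl

lemma exp_I_eq {a b : ℝ} (h : Complex.exp ((a:ℂ) * Complex.I) = Complex.exp ((b:ℂ) * Complex.I)) :
    ∃ k : ℤ, a = b + 2 * Real.pi * k := by
  obtain ⟨n, hn⟩ := Complex.exp_eq_exp_iff_exists_int.mp h
  refine ⟨n, ?_⟩
  have him := congrArg Complex.im hn
  simpa [mul_comm] using him

lemma const_of_int_vals {h : unitInterval → ℝ} (hc : Continuous h)
    (hint : ∀ τ, ∃ k : ℤ, h τ = 2 * Real.pi * k) (τ : unitInterval) : h τ = h 0 := by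
  haveI : ConnectedSpace unitInterval := Subtype.connectedSpace (isConnected_Icc zero_le_one)
  have hS : IsClopen {t : unitInterval | h t = h 0} := by
    constructor
    · exact isClosed_eq hc continuous_const
    · rw [isOpen_iff_mem_nhds]
      intro t ht
      have hev := Metric.tendsto_nhds.mp (hc.continuousAt (x := t)) (2*Real.pi) (by positivity)
      filter_upwards [hev] with t' ht'
      obtain ⟨k, hk⟩ := hint t'
      obtain ⟨k0, hk0⟩ := hint t
      rw [Real.dist_eq, hk, hk0] at ht'
      have habs : |(k:ℝ) - k0| < 1 := by
        have h2 : 2 * Real.pi * |(k:ℝ) - k0| < 2 * Real.pi * 1 := by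
          rw [mul_one]
          calc 2 * Real.pi * |(k:ℝ) - k0| = |2*Real.pi*k - 2*Real.pi*k0| := by
                rw [← mul_sub, abs_mul, abs_of_pos (by positivity : (0:ℝ) < 2*Real.pi)]
          _ < 2 * Real.pi := ht'
        exact lt_of_mul_lt_mul_left h2 (by positivity)
      have : |k - k0| < 1 := by exact_mod_cast (by push_cast; exact habs : |((k - k0 : ℤ):ℝ)| < 1)
      have hkk : k = k0 := by rw [abs_lt] at this; omega
      show h t' = h 0
      rw [hk, hkk, ← hk0]
      exact ht
  have := (isClopen_iff.mp hS).resolve_left (by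
    intro hemp
    have : (0:unitInterval) ∈ {t : unitInterval | h t = h 0} := rfl
    rw [hemp] at this
    exact this)
  have : τ ∈ {t : unitInterval | h t = h 0} := by rw [this]; trivial
  exact this

lemma no_contraction_of_circle_to_exp
    (K : C(unitInterval × unitInterval, ℂ))
    (hunit : ∀ p, ‖K p‖ = 1)
    (hside : ∀ τ : unitInterval, K (τ, 0) = K (τ, 1))
    (hbot : ∀ t : unitInterval, K (0, t) = K (0, 0))
    (htop : ∀ t : unitInterval, K (1, t) = Complex.exp ((2 * Real.pi * t : ℝ) * Complex.I)) :
    False := by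
  obtain ⟨L, hL⟩ := square_lift K hunit
  -- side: L(τ,1) - L(τ,0) is 2πℤ valued, continuous, hence constant
  have hdiff : ∀ τ : unitInterval, ∃ k : ℤ, L (τ, 1) - L (τ, 0) = 2 * Real.pi * k := by
    intro τ
    have : Complex.exp ((L (τ,1) : ℂ) * Complex.I) = Complex.exp ((L (τ,0) : ℂ) * Complex.I) := by
      rw [← hL, ← hL, hside]
    obtain ⟨k, hk⟩ := exp_I_eq this
    exact ⟨k, by linarith⟩
  have hdc : Continuous (fun τ : unitInterval => L (τ, 1) - L (τ, 0)) := by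
    apply Continuous.sub
    · exact L.continuous.comp (continuous_id.prodMk continuous_const)
    · exact L.continuous.comp (continuous_id.prodMk continuous_const)
  have hdconst := const_of_int_vals hdc hdiff 1
  -- bottom: L(0,t) - L(0,0) is 2πℤ valued, continuous, value 0 at t = 0
  have hbint : ∀ t : unitInterval, ∃ k : ℤ, L (0, t) - L (0, 0) = 2 * Real.pi * k := by
    intro t
    have : Complex.exp ((L (0,t) : ℂ) * Complex.I) = Complex.exp ((L (0,0) : ℂ) * Complex.I) := by
      rw [← hL, ← hL, hbot]
    obtain ⟨k, hk⟩ := exp_I_eq this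
    exact ⟨k, by linarith⟩
  have hbc : Continuous (fun t : unitInterval => L ((0:unitInterval), t) - L (0, 0)) :=
    (L.continuous.comp (continuous_const.prodMk continuous_id)).sub continuous_const
  have hbconst := const_of_int_vals hbc hbint 1
  simp only [sub_self] at hbconst
  -- top: L(1,t) - 2πt is 2πℤ valued, continuous, hence constant
  have htint : ∀ t : unitInterval, ∃ k : ℤ, L (1, t) - 2 * Real.pi * t = 2 * Real.pi * k := by
    intro t
    have : Complex.exp ((L (1,t) : ℂ) * Complex.I)
        = Complex.exp (((2 * Real.pi * t : ℝ) : ℂ) * Complex.I) := by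
      rw [← hL, htop]
    obtain ⟨k, hk⟩ := exp_I_eq this
    exact ⟨k, by linarith⟩
  have htc : Continuous (fun t : unitInterval => L ((1:unitInterval), t) - 2 * Real.pi * t) :=
    (L.continuous.comp (continuous_const.prodMk continuous_id)).sub
      ((continuous_const.mul (continuous_subtype_val)) )
  have htconst := const_of_int_vals htc htint 1
  -- combine
  have e1 : L ((1:unitInterval), 1) - 2 * Real.pi = L (1, 0) := by
    have := htconst
    simp only [Set.Icc.coe_one, Set.Icc.coe_zero, mul_one, mul_zero, sub_zero] at this
    linarith
  have e2 : L ((1:unitInterval), 1) - L (1, 0) = L (0, 1) - L (0, 0) := hdconst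
  have hpi : Real.pi ≠ 0 := Real.pi_ne_zero
  rw [hbconst] at e2
  have : (2:ℝ) * Real.pi = 0 := by linarith
  have : Real.pi = 0 := by linarith
  exact hpi this



abbrev E2 : Type := EuclideanSpace ℝ (Fin 2)

def PsiMap : E2 → ℂ := fun x => ⟨x 0, x 1⟩

lemma PsiMap_eq (x : E2) : PsiMap x = (x 0 : ℂ) + (x 1 : ℂ) * Complex.I := by
  apply Complex.ext <;> simp [PsiMap]

lemma PsiMap_cont : Continuous PsiMap := by
  have : PsiMap = fun x : E2 => (x 0 : ℂ) + (x 1 : ℂ) * Complex.I := funext PsiMap_eq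
  rw [this]
  exact (Complex.continuous_ofReal.comp ((continuous_apply 0).comp (PiLp.continuous_ofLp (p := 2) (β := fun _ : Fin 2 => ℝ)))).add
    ((Complex.continuous_ofReal.comp ((continuous_apply 1).comp (PiLp.continuous_ofLp (p := 2) (β := fun _ : Fin 2 => ℝ)))).mul continuous_const)

lemma PsiMap_abs (x : E2) : ‖PsiMap x‖ = ‖x‖ := by
  rw [EuclideanSpace.norm_eq, Fin.sum_univ_two, Complex.norm_def, Complex.normSq_mk]
  congr 1
  simp [Real.norm_eq_abs, sq_abs, PsiMap]
  ring

def phiMap : ℂ → E2 := fun z => (WithLp.equiv 2 (Fin 2 → ℝ)).symm ![z.re, z.im]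

lemma phiMap_cont : Continuous phiMap := by
  apply (PiLp.continuous_toLp (p := 2) (β := fun _ : Fin 2 => ℝ)).comp
  apply continuous_pi
  intro i
  fin_cases i
  · exact Complex.continuous_re
  · exact Complex.continuous_im

lemma PsiMap_phiMap (z : ℂ) : PsiMap (phiMap z) = z := by
  apply Complex.ext <;> simp [PsiMap, phiMap]

lemma phiMap_norm (z : ℂ) : ‖phiMap z‖ = ‖z‖ := by
  rw [EuclideanSpace.norm_eq, Fin.sum_univ_two, Complex.norm_def, Complex.normSq_apply]
  simp [phiMap, Real.norm_eq_abs, sq_abs]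
  ring_nf


local notation "S¹" => Metric.sphere (0 : E2) 1
local notation "D²" => Metric.closedBall (0 : E2) 1

lemma mem_ball_line {a b : E2} (ha : ‖a‖ ≤ 1) (hb : ‖b‖ ≤ 1) {t : ℝ} (h0 : 0 ≤ t) (h1 : t ≤ 1) :
    (1-t) • a + t • b ∈ Metric.closedBall (0:E2) 1 := by
  rw [mem_closedBall_zero_iff]
  calc ‖(1-t)•a + t•b‖ ≤ ‖(1-t)•a‖ + ‖t•b‖ := norm_add_le _ _
  _ = (1-t)*‖a‖ + t*‖b‖ := by
      rw [norm_smul, norm_smul, Real.norm_eq_abs, Real.norm_eq_abs,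
        _root_.abs_of_nonneg (by linarith : (0:ℝ) ≤ 1 - t), _root_.abs_of_nonneg h0]
  _ ≤ (1-t)*1 + t*1 := by
      apply add_le_add
      · exact mul_le_mul_of_nonneg_left ha (by linarith)
      · exact mul_le_mul_of_nonneg_left hb h0
  _ = 1 := by ring

/-- straight-line homotopy between any two maps into the disc -/
def discLineHomotopy {Z : Type} [TopologicalSpace Z] (g h : C(Z, D²)) : g.Homotopy h where
  toFun p := ⟨(1 - (p.1:ℝ)) • (g p.2).1 + (p.1:ℝ) • (h p.2).1,
    mem_ball_line (mem_closedBall_zero_iff.mp (g p.2).2) (mem_closedBall_zero_iff.mp (h p.2).2)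
      p.1.2.1 p.1.2.2⟩
  continuous_toFun := by
    apply Continuous.subtype_mk
    apply Continuous.add
    · exact ((continuous_const.sub (continuous_subtype_val.comp continuous_fst)).smul
        (continuous_subtype_val.comp (g.continuous.comp continuous_snd)))
    · exact ((continuous_subtype_val.comp continuous_fst).smul
        (continuous_subtype_val.comp (h.continuous.comp continuous_snd)))
  map_zero_left := by
    intro z
    apply Subtype.ext
    show (1 - ((0:unitInterval):ℝ)) • (g z).1 + ((0:unitInterval):ℝ) • (h z).1 = (g z).1
    simp
  map_one_left := by
    intro z
    apply Subtype.ext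
    show (1 - ((1:unitInterval):ℝ)) • (g z).1 + ((1:unitInterval):ℝ) • (h z).1 = (h z).1
    simp

/-- any two maps into the disc are homotopic -/
lemma homotopic_ball {Z : Type} [TopologicalSpace Z] (g h : C(Z, D²)) :
    g.Homotopic h := ⟨discLineHomotopy g h⟩

def eLoop : unitInterval → ℂ := fun t => Complex.exp (((2 * Real.pi * t : ℝ) : ℂ) * Complex.I)

lemma eLoop_cont : Continuous eLoop :=
  Complex.continuous_exp.comp ((Complex.continuous_ofReal.comp
    (continuous_const.mul continuous_subtype_val)).mul continuous_const)

lemma eLoop_abs (t : unitInterval) : ‖eLoop t‖ = 1 := Complex.norm_exp_ofReal_mul_I _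

lemma eLoop_zero_eq_one' : eLoop 0 = 1 := by
  show Complex.exp _ = 1
  norm_num [eLoop]

lemma eLoop_one_eq_one' : eLoop 1 = 1 := by
  show Complex.exp _ = 1
  rw [show (((2 * Real.pi * ((1:unitInterval):ℝ) : ℝ) : ℂ) * Complex.I) = 2 * Real.pi * Complex.I by push_cast; ring]
  exact Complex.exp_two_pi_mul_I

lemma phiMap_eLoop_mem (t : unitInterval) : phiMap (eLoop t) ∈ Metric.sphere (0:E2) 1 := by
  rw [mem_sphere_zero_iff_norm, phiMap_norm, eLoop_abs]

def PhiMap : C(unitInterval, S¹) :=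
  ⟨fun t => ⟨phiMap (eLoop t), phiMap_eLoop_mem t⟩,
    (phiMap_cont.comp eLoop_cont).subtype_mk phiMap_eLoop_mem⟩

lemma PhiMap_period : PhiMap 0 = PhiMap 1 := by
  apply Subtype.ext
  show phiMap (eLoop 0) = phiMap (eLoop 1)
  rw [eLoop_zero_eq_one', eLoop_one_eq_one']

lemma unit_Psi (y : S¹) : ‖PsiMap y.1‖ = 1 := by
  rw [PsiMap_abs]
  exact mem_sphere_zero_iff_norm.mp y.2

lemma smul_mem_disc (τ : unitInterval) (x : D²) : (τ:ℝ) • x.1 ∈ Metric.closedBall (0:E2) 1 := by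
  rw [mem_closedBall_zero_iff, norm_smul, Real.norm_eq_abs, _root_.abs_of_nonneg τ.2.1]
  have := mem_closedBall_zero_iff.mp x.2
  nlinarith [τ.2.1, τ.2.2]

def gtop : C(unitInterval, ℂ) := ⟨eLoop, eLoop_cont⟩

def gbot (s : C(D², S¹)) : C(unitInterval, ℂ) :=
  ⟨fun t => PsiMap ((s (circleInclusion (PhiMap t))).1),
   PsiMap_cont.comp (continuous_subtype_val.comp (s.continuous.comp
     (circleInclusion.continuous.comp PhiMap.continuous)))⟩

def gconst (s : C(D², S¹)) : C(unitInterval, ℂ) :=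
  ⟨fun _ => PsiMap ((s ⟨0, by simp⟩).1), continuous_const⟩

def K1 (s : C(D², S¹)) (H : (s.comp circleInclusion).Homotopy (ContinuousMap.id S¹)) :
    (gbot s).Homotopy gtop where
  toFun := fun p => PsiMap ((H (p.1, PhiMap p.2)).1)
  continuous_toFun := PsiMap_cont.comp (continuous_subtype_val.comp
    (H.continuous.comp (continuous_fst.prodMk (PhiMap.continuous.comp continuous_snd))))
  map_zero_left := by
    intro t
    show PsiMap ((H (0, PhiMap t)).1) = _
    rw [H.apply_zero]
    rfl
  map_one_left := by
    intro t
    show PsiMap ((H (1, PhiMap t)).1) = gtop t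
    rw [H.apply_one]
    exact PsiMap_phiMap _

def K2 (s : C(D², S¹)) : (gconst s).Homotopy (gbot s) where
  toFun := fun p => PsiMap ((s ⟨(p.1:ℝ) • (circleInclusion (PhiMap p.2)).1,
    smul_mem_disc p.1 _⟩).1)
  continuous_toFun := PsiMap_cont.comp (continuous_subtype_val.comp (s.continuous.comp
    (Continuous.subtype_mk ((continuous_subtype_val.comp continuous_fst).smul
      (continuous_subtype_val.comp (circleInclusion.continuous.comp
        (PhiMap.continuous.comp continuous_snd)))) _)))
  map_zero_left := by
    intro t
    have hxy : (⟨((0:unitInterval):ℝ) • (circleInclusion (PhiMap t)).1,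
        smul_mem_disc 0 _⟩ : D²) = ⟨0, by simp⟩ := by
      apply Subtype.ext
      show ((0:unitInterval):ℝ) • (circleInclusion (PhiMap t)).1 = (0:E2)
      simp
    exact congrArg (fun w : D² => PsiMap ((s w).1)) hxy
  map_one_left := by
    intro t
    have hxy : (⟨((1:unitInterval):ℝ) • (circleInclusion (PhiMap t)).1,
        smul_mem_disc 1 _⟩ : D²) = circleInclusion (PhiMap t) := by
      apply Subtype.ext
      show ((1:unitInterval):ℝ) • (circleInclusion (PhiMap t)).1 = (circleInclusion (PhiMap t)).1
      simp
    exact congrArg (fun w : D² => PsiMap ((s w).1)) hxy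

lemma K1_side (s : C(D², S¹)) (H : (s.comp circleInclusion).Homotopy (ContinuousMap.id S¹))
    (sg : unitInterval) : K1 s H (sg, 0) = K1 s H (sg, 1) := by
  show PsiMap ((H (sg, PhiMap 0)).1) = PsiMap ((H (sg, PhiMap 1)).1)
  rw [PhiMap_period]

lemma K2_side (s : C(D², S¹)) (sg : unitInterval) : K2 s (sg, 0) = K2 s (sg, 1) := by
  show PsiMap ((s ⟨(sg:ℝ) • (circleInclusion (PhiMap 0)).1, _⟩).1)
    = PsiMap ((s ⟨(sg:ℝ) • (circleInclusion (PhiMap 1)).1, _⟩).1)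
  have hxy : (⟨(sg:ℝ) • (circleInclusion (PhiMap 0)).1, smul_mem_disc sg _⟩ : D²)
      = ⟨(sg:ℝ) • (circleInclusion (PhiMap 1)).1, smul_mem_disc sg _⟩ := by
    apply Subtype.ext
    show (sg:ℝ) • (circleInclusion (PhiMap 0)).1 = (sg:ℝ) • (circleInclusion (PhiMap 1)).1
    rw [PhiMap_period]
  exact congrArg (fun w : D² => PsiMap ((s w).1)) hxy

/-- There is no continuous `s : D² → S¹` with `s ∘ ι ≃ id`. -/
lemma no_homotopy_section_zero (s : C(D², S¹))
    (h : (s.comp circleInclusion).Homotopic (ContinuousMap.id S¹)) : False := by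
  obtain ⟨H⟩ := h
  apply no_contraction_of_circle_to_exp ((K2 s).trans (K1 s H)).toContinuousMap
  · intro p
    show ‖((K2 s).trans (K1 s H)) p‖ = 1
    rw [ContinuousMap.Homotopy.trans_apply]
    split_ifs <;> exact unit_Psi _
  · intro τ
    show ((K2 s).trans (K1 s H)) (τ, 0) = ((K2 s).trans (K1 s H)) (τ, 1)
    rw [ContinuousMap.Homotopy.trans_apply, ContinuousMap.Homotopy.trans_apply]
    split_ifs with hsplit
    · exact K2_side s _
    · exact K1_side s H _
  · intro t
    show ((K2 s).trans (K1 s H)) (0, t) = ((K2 s).trans (K1 s H)) (0, 0)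
    rw [ContinuousMap.Homotopy.apply_zero, ContinuousMap.Homotopy.apply_zero]
    rfl
  · intro t
    show ((K2 s).trans (K1 s H)) (1, t) = _
    rw [ContinuousMap.Homotopy.apply_one]
    rfl


/-! ### the section of the fibrewise join -/

def basePt : S¹ := PhiMap 0

def lineFrom : C(S¹ × unitInterval, D²) where
  toFun q := ⟨(1 - (q.2:ℝ)) • (basePt : E2) + (q.2:ℝ) • (q.1 : E2),
    mem_ball_line (mem_sphere_zero_iff_norm.mp basePt.2).le
      (mem_sphere_zero_iff_norm.mp q.1.2).le q.2.2.1 q.2.2.2⟩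
  continuous_toFun := by
    apply Continuous.subtype_mk
    exact ((continuous_const.sub (continuous_subtype_val.comp continuous_snd)).smul
        continuous_const).add
      ((continuous_subtype_val.comp continuous_snd).smul
        (continuous_subtype_val.comp continuous_fst))

def Gline : C(S¹, C(unitInterval, D²)) := lineFrom.curry

open scoped Classical in
def uMap : E2 → S¹ := fun v =>
  if h : v = 0 then basePt else ⟨‖v‖⁻¹ • v, by
    rw [mem_sphere_zero_iff_norm, norm_smul, norm_inv, norm_norm,
      inv_mul_cancel₀ (norm_ne_zero_iff.mpr h)]⟩

lemma uMap_continuousAt {v : E2} (hv : v ≠ 0) : ContinuousAt uMap v := by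
  apply Topology.IsInducing.subtypeVal.continuousAt_iff.mpr
  show ContinuousAt (Subtype.val ∘ uMap) v
  have hsm : ContinuousAt (fun w : E2 => ‖w‖⁻¹ • w) v :=
    (continuous_norm.continuousAt.inv₀ (norm_ne_zero_iff.mpr hv)).smul continuousAt_id
  apply ContinuousAt.congr hsm
  filter_upwards [isOpen_compl_singleton.mem_nhds (by simpa using hv)] with w hw
  have : Subtype.val (uMap w) = ‖w‖⁻¹ • w := by
    simp only [uMap]
    rw [dif_neg (by simpa using hw)]
  exact this.symm

lemma uMap_sphere (y : S¹) : uMap (y : E2) = y := by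
  have h0 : (y : E2) ≠ 0 := by
    intro h
    have := mem_sphere_zero_iff_norm.mp y.2
    rw [h] at this
    simp at this
  simp only [uMap]
  rw [dif_neg h0]
  apply Subtype.ext
  show ‖(y:E2)‖⁻¹ • (y:E2) = (y:E2)
  rw [mem_sphere_zero_iff_norm.mp y.2, inv_one, one_smul]

def ppMap (v : E2) : HPullback (iJoin circleInclusion 0).p circleInclusion :=
  ⟨(basePt, Gline (uMap v), uMap v),
    by
      apply Subtype.ext
      show (1 - ((0:unitInterval):ℝ)) • (basePt : E2) + ((0:unitInterval):ℝ) • _ = (basePt : E2)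
      simp,
    by
      apply Subtype.ext
      show (1 - ((1:unitInterval):ℝ)) • (basePt : E2) + ((1:unitInterval):ℝ) • ((uMap v : E2)) = _
      simp
      rfl⟩

lemma ppMap_continuousAt {v : E2} (hv : v ≠ 0) : ContinuousAt ppMap v := by
  apply Topology.IsInducing.subtypeVal.continuousAt_iff.mpr
  show ContinuousAt (fun w => (basePt, Gline (uMap w), uMap w)) v
  exact continuousAt_const.prodMk
    (((Gline.continuous.continuousAt).comp (uMap_continuousAt hv)).prodMk (uMap_continuousAt hv))

def ttMap : E2 → unitInterval := fun v => Set.projIcc 0 1 zero_le_one (2*‖v‖-1)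

lemma ttMap_continuous : Continuous ttMap :=
  continuous_projIcc.comp ((continuous_const.mul continuous_norm).sub continuous_const)

def sOneFun : D² → (iJoin circleInclusion 1).E := fun z =>
  Quot.mk _ (Sum.inr (Sum.inl (ppMap z.1, ttMap z.1)))

lemma sOneFun_continuous : Continuous sOneFun := by
  rw [continuous_iff_continuousAt]
  intro z₀
  by_cases h : (z₀ : E2) = 0
  · -- locally constant near the centre
    have hopen : IsOpen {z : D² | ‖(z:E2)‖ < 1/2} :=
      (isOpen_Iio).preimage (continuous_norm.comp continuous_subtype_val)
    have hmem : z₀ ∈ {z : D² | ‖(z:E2)‖ < 1/2} := by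
      show ‖(z₀:E2)‖ < 1/2
      rw [h]
      norm_num
    apply ContinuousAt.congr (continuousAt_const
      (y := (Quot.mk _ (Sum.inl basePt) : (iJoin circleInclusion 1).E)))
    filter_upwards [hopen.mem_nhds hmem] with w hw
    have htt : ttMap (w : E2) = 0 := by
      apply Subtype.ext
      show (Set.projIcc 0 1 zero_le_one (2*‖(w:E2)‖-1) : ℝ) = 0
      rw [Set.projIcc_of_le_left _ (by simp at hw; linarith)]
    have hkey : sOneFun w = Quot.mk _ (Sum.inl basePt) := by
      show Quot.mk _ (Sum.inr (Sum.inl (ppMap (w:E2), ttMap (w:E2)))) = _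
      rw [htt]
      exact Quot.sound (CylRel.zero (ppMap (w:E2)))
    exact hkey.symm
  · have hpair : ContinuousAt (fun z : D² => (ppMap (z:E2), ttMap (z:E2))) z₀ :=
      ((ppMap_continuousAt h).comp continuous_subtype_val.continuousAt).prodMk
        (ttMap_continuous.comp continuous_subtype_val).continuousAt
    exact ((continuous_quot_mk.comp (continuous_inr.comp continuous_inl)).continuousAt).comp hpair

def sOne : C(D², (iJoin circleInclusion 1).E) := ⟨sOneFun, sOneFun_continuous⟩

lemma sOne_comp : sOne.comp circleInclusion = iotaJoin circleInclusion 1 := by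
  apply ContinuousMap.ext
  intro y
  show Quot.mk _ (Sum.inr (Sum.inl (ppMap (y:E2), ttMap (y:E2)))) = _
  have htt : ttMap (y : E2) = 1 := by
    apply Subtype.ext
    show (Set.projIcc 0 1 zero_le_one (2*‖(y:E2)‖-1) : ℝ) = 1
    rw [Set.projIcc_of_right_le _ (by rw [mem_sphere_zero_iff_norm.mp y.2]; norm_num)]
  rw [htt]
  refine (Quot.sound (CylRel.one (ppMap (y:E2)))).trans ?_
  show Quot.mk _ (Sum.inr (Sum.inr (uMap (y:E2)))) = _
  rw [uMap_sphere y]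
  rfl

end Aux

/-- For the inclusion `f : S¹ ↪ D²`, `secat(f) = 0` and `relcat(f) = 1`. -/
theorem secat_circleInclusion_eq_zero_and_relcat_eq_one :
    secat circleInclusion = 0 ∧ relcat circleInclusion = 1 := by
  constructor
  · -- secat = 0
    apply le_antisymm _ (zero_le)
    apply sInf_le
    refine ⟨0, by norm_num, ?_⟩
    exact ⟨⟨fun _ => basePt, continuous_const⟩, homotopic_ball _ _⟩
  · apply le_antisymm
    · apply sInf_le
      refine ⟨1, by norm_num, sOne, homotopic_ball _ _, ?_⟩
      rw [sOne_comp]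
    · apply le_sInf
      rintro b ⟨m, rfl, s, h1, h2⟩
      cases m with
      | zero => exact (no_homotopy_section_zero s h2).elim
      | succ k => exact_mod_cast Nat.succ_le_succ (Nat.zero_le k)

end
end

section
/- Let π : E → B be a fibration with a strict section σ : B → E, let u : X → B be a map and û : X → E a strict lift of u (π ∘ û = u). If σ ∘ u is homotopic to û, then σ ∘ u is fibrewise homotopic to û over B. -/
open ContinuousMap unitInterval

noncomputable section

universe u

/-- A (Hurewicz) fibration: a map with the homotopy lifting property with respect to
all spaces. -/
def IsFibration {E B : Type u} [TopologicalSpace E] [TopologicalSpace B]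
    (p : C(E, B)) : Prop :=
  ∀ (Z : Type u) [TopologicalSpace Z] (h : C(Z × I, B)) (h₀ : C(Z, E)),
    (∀ z, p (h₀ z) = h (z, 0)) →
    ∃ H : C(Z × I, E), (∀ z, H (z, 0) = h₀ z) ∧ ∀ zt, p (H zt) = h zt

/-- Two maps `g h : X → E` lying over the same map to `B` are fibrewise homotopic over `B`
if there is a homotopy from `g` to `h` which, at every time, still lies over that map. -/
def FibrewiseHomotopic {E B X : Type u} [TopologicalSpace E] [TopologicalSpace B]
    [TopologicalSpace X] (p : C(E, B)) (g h : C(X, E)) : Prop :=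
  ∃ H : g.Homotopy h, ∀ (t : I) (x : X), p (H (t, x)) = p (g x)

/-- Concatenation of two vertical homotopies over the same map is vertical. -/
theorem vert_trans {E B X : Type u} [TopologicalSpace E] [TopologicalSpace B]
    [TopologicalSpace X] (p : C(E, B)) {f g k : C(X, E)} (F : f.Homotopy g)
    (G : g.Homotopy k) (v : X → B) (hF : ∀ t x, p (F (t, x)) = v x)
    (hG : ∀ t x, p (G (t, x)) = v x) : ∀ t x, p ((F.trans G) (t, x)) = v x := by
  intro t x
  rw [ContinuousMap.Homotopy.trans_apply]
  split_ifs <;> [exact hF _ _; exact hG _ _]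

/-- Harper's lemma: if `π : E → B` is a fibration with a strict section `sec`,
`u : X → B` a map and `uhat : X → E` a strict lift of `u`, and if `sec ∘ u` is homotopic to `uhat`,
then `sec ∘ u` is fibrewise homotopic to `uhat` over `B`. -/
theorem harper_fibrewise_homotopy {E B X : Type u} [TopologicalSpace E] [TopologicalSpace B]
    [TopologicalSpace X] (p : C(E, B)) (hp : IsFibration p)
    (sec : C(B, E)) (hsec : p.comp sec = ContinuousMap.id B)
    (u : C(X, B)) (uhat : C(X, E)) (hlift : p.comp uhat = u)
    (h : (sec.comp u).Homotopic uhat) :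
    FibrewiseHomotopic p (sec.comp u) uhat := by
  obtain ⟨G⟩ := h
  have hpsec : ∀ b, p (sec b) = b := fun b => ContinuousMap.congr_fun hsec b
  have hpuhat : ∀ x, p (uhat x) = u x := fun x => ContinuousMap.congr_fun hlift x
  -- the "tent" reparametrisation  τ t = |2t - 1|
  have hmem : ∀ t : I, |2 * (t : ℝ) - 1| ∈ I := by
    intro t
    constructor
    · exact abs_nonneg _
    · rw [abs_le]
      constructor <;> [linarith [t.2.1]; linarith [t.2.2]]
  set τ : I → I := fun t => ⟨|2 * (t : ℝ) - 1|, hmem t⟩ with hτ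
  have τcont : Continuous τ := Continuous.subtype_mk (by fun_prop) _
  set j₁ : I → I := fun t => Set.projIcc (0 : ℝ) 1 zero_le_one (1 - 2 * (t : ℝ)) with hj₁def
  set j₂ : I → I := fun t => Set.projIcc (0 : ℝ) 1 zero_le_one (2 * (t : ℝ) - 1) with hj₂def
  have j₁cont : Continuous j₁ := continuous_projIcc.comp (by fun_prop)
  have j₂cont : Continuous j₂ := continuous_projIcc.comp (by fun_prop)
  have hj₁ : ∀ t : I, (t : ℝ) ≤ 1 / 2 → j₁ t = τ t := by
    intro t ht
    apply Subtype.ext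
    rw [hj₁def, hτ]
    show max 0 (min 1 (1 - 2 * (t : ℝ))) = |2 * (t : ℝ) - 1|
    rw [abs_of_nonpos (by linarith), min_eq_right (by linarith [t.2.1]),
      max_eq_right (by linarith)]
    ring
  have hj₂ : ∀ t : I, 1 / 2 ≤ (t : ℝ) → j₂ t = τ t := by
    intro t ht
    apply Subtype.ext
    rw [hj₂def, hτ]
    show max 0 (min 1 (2 * (t : ℝ) - 1)) = |2 * (t : ℝ) - 1|
    rw [abs_of_nonneg (by linarith), min_eq_right (by linarith [t.2.2]),
      max_eq_right (by linarith)]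
  -- the bottom of the square to be lifted: `sec ∘ k` run backwards, followed by `G`
  set b : C(X × I, E) :=
    ⟨fun q => if ((q.2 : ℝ)) ≤ 1 / 2 then sec (p (G (j₁ q.2, q.1))) else G (j₂ q.2, q.1), by
      apply continuous_if_le (by fun_prop) continuous_const
      · exact Continuous.continuousOn <| by
          apply sec.continuous.comp
          apply p.continuous.comp
          exact G.continuous.comp (by fun_prop)
      · exact Continuous.continuousOn <| G.continuous.comp (by fun_prop)
      · rintro ⟨x, t⟩ ht
        simp only at ht ⊢
        have h1 : j₁ t = 0 := by
          apply Subtype.ext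
          show max 0 (min 1 (1 - 2 * (t : ℝ))) = 0
          rw [ht]; norm_num
        have h2 : j₂ t = 0 := by
          apply Subtype.ext
          show max 0 (min 1 (2 * (t : ℝ) - 1)) = 0
          rw [ht]; norm_num
        rw [h1, h2, G.apply_zero]
        show sec (p (sec (u x))) = sec (u x)
        rw [hpsec]⟩ with hbdef
  -- the square of base maps
  set Φ : C((X × I) × I, B) := ⟨fun q => p (G (max (τ q.1.2) q.2, q.1.1)), by
    apply p.continuous.comp
    apply G.continuous.comp
    apply Continuous.prodMk
    · exact (τcont.comp (continuous_snd.comp continuous_fst)).max continuous_snd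
    · exact continuous_fst.comp continuous_fst⟩ with hΦdef
  have hb : ∀ z : X × I, p (b z) = Φ (z, 0) := by
    rintro ⟨x, t⟩
    have hmax0 : max (τ t) (0 : I) = τ t := max_eq_left (τ t).2.1
    show p (if ((t : ℝ)) ≤ 1 / 2 then sec (p (G (j₁ t, x))) else G (j₂ t, x)) =
      p (G (max (τ t) 0, x))
    rw [hmax0]
    split_ifs with ht
    · rw [hpsec, hj₁ t ht]
    · rw [hj₂ t (le_of_not_ge ht)]
  obtain ⟨W, hW0, hWp⟩ := hp (X × I) Φ b hb
  -- basic computations about τ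
  have hτ0 : τ 0 = 1 := by
    apply Subtype.ext
    show |2 * ((0 : I) : ℝ) - 1| = 1
    norm_num
  have hτ1 : τ 1 = 1 := by
    apply Subtype.ext
    show |2 * ((1 : I) : ℝ) - 1| = 1
    norm_num
  -- the three boundary edges are vertical
  have hvleft : ∀ (s : I) (x : X), p (W ((x, 0), s)) = u x := by
    intro s x
    rw [hWp ((x, 0), s)]
    show p (G (max (τ 0) s, x)) = u x
    rw [hτ0, max_eq_left le_one', G.apply_one, hpuhat]
  have hvright : ∀ (s : I) (x : X), p (W ((x, 1), s)) = u x := by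
    intro s x
    rw [hWp ((x, 1), s)]
    show p (G (max (τ 1) s, x)) = u x
    rw [hτ1, max_eq_left le_one', G.apply_one, hpuhat]
  have hvtop : ∀ (t : I) (x : X), p (W ((x, t), 1)) = u x := by
    intro t x
    rw [hWp ((x, t), 1)]
    show p (G (max (τ t) 1, x)) = u x
    rw [max_eq_right le_one', G.apply_one, hpuhat]
  -- the two bottom corners
  have hW00 : ∀ x, W ((x, 0), 0) = sec (u x) := by
    intro x
    rw [hW0 (x, 0)]
    show (if (((0 : I) : ℝ)) ≤ 1 / 2 then sec (p (G (j₁ 0, x))) else G (j₂ 0, x)) = sec (u x)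
    rw [if_pos (by norm_num)]
    have h1 : j₁ 0 = 1 := by
      apply Subtype.ext
      show max 0 (min 1 (1 - 2 * ((0 : I) : ℝ))) = 1
      norm_num
    rw [h1, G.apply_one, hpuhat]
  have hW10 : ∀ x, W ((x, 1), 0) = uhat x := by
    intro x
    rw [hW0 (x, 1)]
    show (if (((1 : I) : ℝ)) ≤ 1 / 2 then sec (p (G (j₁ 1, x))) else G (j₂ 1, x)) = uhat x
    rw [if_neg (by norm_num)]
    have h2 : j₂ 1 = 1 := by
      apply Subtype.ext
      show max 0 (min 1 (2 * ((1 : I) : ℝ) - 1)) = 1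
      norm_num
    rw [h2, G.apply_one]
  -- the two intermediate maps
  set e₀ : C(X, E) := ⟨fun x => W ((x, 0), 1), W.continuous.comp (by fun_prop)⟩ with he₀
  set e₁ : C(X, E) := ⟨fun x => W ((x, 1), 1), W.continuous.comp (by fun_prop)⟩ with he₁
  -- the three vertical homotopies
  set H₁ : (sec.comp u).Homotopy e₀ :=
    { toFun := fun q => W ((q.2, 0), q.1)
      continuous_toFun := W.continuous.comp (by fun_prop)
      map_zero_left := fun x => hW00 x
      map_one_left := fun x => rfl } with hH₁
  set H₂ : e₀.Homotopy e₁ :=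
    { toFun := fun q => W ((q.2, q.1), 1)
      continuous_toFun := W.continuous.comp (by fun_prop)
      map_zero_left := fun x => rfl
      map_one_left := fun x => rfl } with hH₂
  set H₃ : e₁.Homotopy uhat :=
    { toFun := fun q => W ((q.2, 1), unitInterval.symm q.1)
      continuous_toFun := W.continuous.comp (by fun_prop)
      map_zero_left := fun x => by
        show W ((x, 1), unitInterval.symm 0) = e₁ x
        rw [unitInterval.symm_zero]
        rfl
      map_one_left := fun x => by
        show W ((x, 1), unitInterval.symm 1) = uhat x
        rw [unitInterval.symm_one]
        exact hW10 x } with hH₃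
  refine ⟨(H₁.trans H₂).trans H₃, ?_⟩
  intro t x
  have hgoal : p (sec.comp u x) = u x := hpsec (u x)
  rw [hgoal]
  refine vert_trans p _ _ u ?_ ?_ t x
  · refine vert_trans p _ _ u ?_ ?_
    · intro t x; exact hvleft t x
    · intro t x; exact hvtop t x
  · intro t x; exact hvright (unitInterval.symm t) x

end
end
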